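/- Let p_1 ≤ ... ≤ p_k be in [0,1]. If T is a probability distribution on {1,2}^k with marginals Pr[T_i = 1] = p_i such that for every nonempty subset I ⊆ {1,...,k}, Pr[T_i = 1 for all i ∈ I] = min_{i∈I} p_i and Pr[T_i = 2 for all i ∈ I] = min_{i∈I}(1-p_i), then T assigns mass p_1 to (1,...,1), mass p_{l+1}-p_l to the vector with l leading 2's followed by 1's for 1 ≤ l ≤ k-1, mass 1-p_k to (2,...,2), and mass 0 to every other vector in {1,2}^k. -/

import Mathlib

open Finset

/-- Threshold vector in `{1,2}^k` (`0` encodes the value "1", `1` encodes "2"):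
`l` leading 2's followed by 1's. -/
def vecT (k l : ℕ) : Fin k → Fin 2 := fun i => if (i : ℕ) < l then 1 else 0

/-- The "staircase" distribution on `{1,2}^k` determined by sorted marginal
probabilities `p 0 ≤ … ≤ p (k-1)`. -/
noncomputable def stair (k : ℕ) (p : Fin k → ℝ) : (Fin k → Fin 2) → ℝ :=
  fun x => ∑ l : Fin (k + 1),
    if x = vecT k (l : ℕ) then
      (if h : (l : ℕ) < k then p ⟨(l : ℕ), h⟩ else 1)
        - (if h : (l : ℕ) ≠ 0 then p ⟨(l : ℕ) - 1, by have := l.isLt; omega⟩ else 0)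
    else 0

/-- The probability, under the joint distribution `T` on `{1,2}^k`, that all
coordinates in `I` equal `v`. -/
noncomputable def prAll (k : ℕ) (T : (Fin k → Fin 2) → ℝ) (I : Finset (Fin k))
    (v : Fin 2) : ℝ :=
  ∑ x : Fin k → Fin 2, if ∀ i ∈ I, x i = v then T x else 0

/-- `T` is a multimaximal coupling of binary random variables with 1-probabilities
`p i`: it is a probability distribution and, for every nonempty index set `I`, the
probability that all coordinates in `I` equal "1" is `min_{i∈I} p i` and the
probability that all equal "2" is `min_{i∈I} (1 - p i)` (the maximal values
attainable by any coupling). Taking `I` a singleton gives the marginal conditions. -/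
def IsMultimax (k : ℕ) (p : Fin k → ℝ) (T : (Fin k → Fin 2) → ℝ) : Prop :=
  (∀ x, 0 ≤ T x) ∧ (∑ x : Fin k → Fin 2, T x = 1) ∧
    ∀ I : Finset (Fin k), ∀ hI : I.Nonempty,
      prAll k T I 0 = I.inf' hI p ∧ prAll k T I 1 = I.inf' hI (fun i => 1 - p i)

lemma vecT_inj (k a b : ℕ) (ha : a ≤ k) (hb : b ≤ k) (h : vecT k a = vecT k b) : a = b := by
  rcases lt_trichotomy a b with h' | h' | h'
  · have := congrFun h ⟨a, lt_of_lt_of_le h' hb⟩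
    simp [vecT, h'] at this
  · exact h'
  · have := congrFun h ⟨b, lt_of_lt_of_le h' ha⟩
    simp [vecT, h'] at this

lemma diffl (k : ℕ) (T : (Fin k → Fin 2) → ℝ) (a b : Fin k) :
    prAll k T {a} 0 - prAll k T {a,b} 0
      = ∑ x : Fin k → Fin 2, if x a = 0 ∧ x b = 1 then T x else 0 := by
  rw [prAll, prAll, ← Finset.sum_sub_distrib]
  apply Finset.sum_congr rfl
  intro x _
  simp only [mem_singleton, mem_insert, forall_eq, forall_eq_or_imp]
  have hb : x b = 0 ∨ x b = 1 := by omega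
  by_cases ha : x a = 0
  · rcases hb with hb | hb <;> simp [ha, hb]
  · have ha1 : x a = 1 := by omega
    simp [ha, ha1]

lemma thresh (k : ℕ) (x : Fin k → Fin 2)
    (h : ∀ i j : Fin k, i < j → x j = 1 → x i = 1) :
    x = vecT k (univ.filter fun i => x i = 1).card := by
  set S := univ.filter fun i => x i = 1 with hS
  have mem_iff : ∀ i : Fin k, i ∈ S ↔ (i : ℕ) < S.card := by
    intro i
    constructor
    · intro hi
      have hsub : Finset.Iic i ⊆ S := by
        intro j hj
        simp only [Finset.mem_Iic] at hj
        rcases eq_or_lt_of_le hj with rfl | hlt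
        · exact hi
        · simp only [hS, mem_filter, mem_univ, true_and] at hi ⊢
          exact h j i hlt hi
      have := Finset.card_le_card hsub
      rw [Fin.card_Iic] at this
      omega
    · intro hi
      by_contra hni
      have hsub : S ⊆ Finset.Iio i := by
        intro j hj
        simp only [Finset.mem_Iio]
        by_contra hji
        push_neg at hji
        rcases eq_or_lt_of_le hji with rfl | hlt
        · exact hni hj
        · apply hni
          simp only [hS, mem_filter, mem_univ, true_and] at hj ⊢
          exact h i j hlt hj
      have := Finset.card_le_card hsub
      rw [Fin.card_Iio] at this
      omega
  funext i
  have hmi := mem_iff i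
  simp only [hS, mem_filter, mem_univ, true_and] at hmi
  rw [vecT]
  by_cases hi : (i : ℕ) < S.card
  · rw [if_pos hi]; exact hmi.mpr hi
  · rw [if_neg hi]
    have : x i ≠ 1 := fun hx => hi (hmi.mp hx)
    omega


/-- a probability distribution on `{1,2}^k` satisfying all the
multimaximality equalities (for sorted `p`) must be the staircase distribution. -/
theorem stmt3 (k : ℕ) (p : Fin k → ℝ) (hmono : Monotone p)
    (h0 : ∀ i, 0 ≤ p i) (h1 : ∀ i, p i ≤ 1)
    (T : (Fin k → Fin 2) → ℝ)
    (hnn : ∀ x, 0 ≤ T x) (hsum : ∑ x : Fin k → Fin 2, T x = 1)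
    (hmm : ∀ I : Finset (Fin k), ∀ hI : I.Nonempty,
      prAll k T I 0 = I.inf' hI p ∧ prAll k T I 1 = I.inf' hI (fun i => 1 - p i)) :
    T = stair k p := by
  rcases Nat.eq_zero_or_pos k with rfl | hk
  · funext x
    have hTx : T x = 1 := by
      rw [← hsum, Fintype.sum_subsingleton _ x]
    have hxe : x = vecT 0 0 := funext fun i => i.elim0
    rw [hTx, stair, Fin.sum_univ_one]
    simp [← hxe]
  -- k > 0
  have key : ∀ (i j : Fin k), i < j → ∀ x, x i = 0 → x j = 1 → T x = 0 := by
    intro i j hij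
    have hI : ({i} : Finset (Fin k)).Nonempty := ⟨i, by simp⟩
    have hJ : ({i, j} : Finset (Fin k)).Nonempty := ⟨i, by simp⟩
    have e1 := (hmm {i} hI).1
    have e2 := (hmm {i, j} hJ).1
    have hinf : ({i, j} : Finset (Fin k)).inf' hJ p = p i := by
      rw [Finset.inf'_insert, Finset.inf'_singleton]
      exact min_eq_left (hmono hij.le)
      exact Finset.singleton_nonempty j
    have hz : (∑ x : Fin k → Fin 2, if x i = 0 ∧ x j = 1 then T x else 0) = 0 := by
      rw [← diffl, e1, e2, hinf, Finset.inf'_singleton, sub_self]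
    intro x hxi hxj
    have hnn' : ∀ y ∈ (univ : Finset (Fin k → Fin 2)),
        0 ≤ if y i = 0 ∧ y j = 1 then T y else 0 := by
      intro y _; split
      · exact hnn y
      · exact le_rfl
    have := (Finset.sum_eq_zero_iff_of_nonneg hnn').mp hz x (mem_univ x)
    simpa [hxi, hxj] using this
  funext x
  by_cases hx : ∃ i j : Fin k, i < j ∧ x i = 0 ∧ x j = 1
  · obtain ⟨i, j, hij, hxi, hxj⟩ := hx
    rw [key i j hij x hxi hxj, stair]
    symm
    apply Finset.sum_eq_zero
    intro l _
    rw [if_neg]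
    intro hxe
    have h1' : ¬ ((i : ℕ) < (l : ℕ)) := by
      intro h; rw [hxe] at hxi; simp [vecT, h] at hxi
    have h2' : (j : ℕ) < (l : ℕ) := by
      by_contra h; rw [hxe] at hxj; simp [vecT, h] at hxj
    have := Fin.lt_def.mp hij
    omega
  · push_neg at hx
    have hcl : ∀ i j : Fin k, i < j → x j = 1 → x i = 1 := by
      intro i j hij hj
      have := hx i j hij
      omega
    have hex : ∃ m, m ≤ k ∧ x = vecT k m :=
      ⟨(univ.filter fun i => x i = 1).card,
        le_trans (Finset.card_filter_le _ _) (by simp), thresh k x hcl⟩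
    obtain ⟨m, hmk, hxt⟩ := hex
    have hstair : stair k p x = (if h : m < k then p ⟨m, h⟩ else 1)
        - (if h : m ≠ 0 then p ⟨m - 1, by omega⟩ else 0) := by
      rw [stair, Finset.sum_eq_single (⟨m, by omega⟩ : Fin (k + 1))]
      · rw [if_pos hxt]
      · intro l _ hl
        rw [if_neg]
        intro he
        apply hl
        have : (l : ℕ) = m := by
          apply vecT_inj k _ _ (by omega) hmk
          rw [← he, hxt]
        exact Fin.ext (by simpa using this)
      · intro h; exact absurd (mem_univ _) h
    rw [hstair, hxt]
    by_cases hm0 : m = 0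
    · subst hm0
      have huniv : (univ : Finset (Fin k)).Nonempty := ⟨⟨0, hk⟩, mem_univ _⟩
      have e := (hmm univ huniv).1
      have hpr : prAll k T univ 0 = T (vecT k 0) := by
        rw [prAll, Finset.sum_eq_single (vecT k 0)]
        · rw [if_pos (fun i _ => by simp [vecT])]
        · intro y _ hy
          rw [if_neg]
          intro hy2
          exact hy (funext fun i => by rw [hy2 i (mem_univ i)]; simp [vecT])
        · intro h; exact absurd (mem_univ _) h
      have hinf : univ.inf' huniv p = p ⟨0, hk⟩ := by
        apply le_antisymm (Finset.inf'_le _ (mem_univ _))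
        apply Finset.le_inf'
        intro b _
        exact hmono (by simp [Fin.le_def])
      rw [← hpr, e, hinf]
      simp [hk]
    by_cases hmk' : m = k
    · have huniv : (univ : Finset (Fin k)).Nonempty := ⟨⟨0, hk⟩, mem_univ _⟩
      have e := (hmm univ huniv).2
      have hpr : prAll k T univ 1 = T (vecT k k) := by
        rw [prAll, Finset.sum_eq_single (vecT k k)]
        · rw [if_pos (fun i _ => by simp [vecT, i.isLt])]
        · intro y _ hy
          rw [if_neg]
          intro hy2
          exact hy (funext fun i => by rw [hy2 i (mem_univ i)]; simp [vecT, i.isLt])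
        · intro h; exact absurd (mem_univ _) h
      have hinf : univ.inf' huniv (fun i => 1 - p i) = 1 - p ⟨k - 1, by omega⟩ := by
        apply le_antisymm (Finset.inf'_le _ (mem_univ _))
        apply Finset.le_inf'
        intro b _
        have : p b ≤ p ⟨k - 1, by omega⟩ := hmono (by simp [Fin.le_def]; omega)
        linarith
      simp only [hmk']; rw [← hpr, e, hinf]
      rw [dif_neg (lt_irrefl k), dif_pos (by omega : k ≠ 0)]
    · have hm1 : 0 < m := Nat.pos_of_ne_zero hm0
      have hmlt : m < k := lt_of_le_of_ne hmk hmk'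
      set i : Fin k := ⟨m - 1, by omega⟩ with hi
      set j : Fin k := ⟨m, hmlt⟩ with hj
      have hij : i < j := by rw [Fin.lt_def]; simp [hi, hj]; omega
      have hJ : ({j} : Finset (Fin k)).Nonempty := ⟨j, by simp⟩
      have hJI : ({j, i} : Finset (Fin k)).Nonempty := ⟨j, by simp⟩
      have e1 := (hmm {j} hJ).1
      have e2 := (hmm {j, i} hJI).1
      have hinf : ({j, i} : Finset (Fin k)).inf' hJI p = p i := by
        rw [Finset.inf'_insert, Finset.inf'_singleton]
        exact min_eq_right (hmono hij.le)
        exact Finset.singleton_nonempty i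
      have hd := diffl k T j i
      rw [e1, e2, hinf, Finset.inf'_singleton] at hd
      have hsingle : (∑ y : Fin k → Fin 2, if y j = 0 ∧ y i = 1 then T y else 0)
          = T (vecT k m) := by
        rw [Finset.sum_eq_single (vecT k m)]
        · rw [if_pos]
          constructor
          · simp [vecT, hj]
          · simp [vecT, hi]; omega
        · intro y _ hy
          by_cases hcond : y j = 0 ∧ y i = 1
          case neg => rw [if_neg hcond]
          rw [if_pos hcond]
          obtain ⟨hyj, hyi⟩ := hcond
          have hex : ∃ c, y c ≠ vecT k m c := by
            by_contra hc
            push_neg at hc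
            exact hy (funext hc)
          obtain ⟨c, hc⟩ := hex
          by_cases hcm : (c : ℕ) < m
          · have hyc : y c = 0 := by
              have hv : vecT k m c = 1 := by simp [vecT, hcm]
              rw [hv] at hc; omega
            have hci : c < i := by
              have hne : c ≠ i := by
                intro h
                rw [h, hyi] at hyc
                exact absurd hyc (by decide)
              have hne' : (c : ℕ) ≠ m - 1 := fun h => hne (Fin.ext (by simp [hi, h]))
              rw [Fin.lt_def]
              simp only [hi]
              omega
            exact key c i hci y hyc hyi
          · have hyc : y c = 1 := by
              have hv : vecT k m c = 0 := by simp [vecT, hcm]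
              rw [hv] at hc; omega
            have hjc : j < c := by
              have hne : c ≠ j := by
                intro h
                rw [h, hyj] at hyc
                exact absurd hyc (by decide)
              have hne' : (c : ℕ) ≠ m := fun h => hne (Fin.ext (by simp [hj, h]))
              rw [Fin.lt_def]
              simp only [hj]
              omega
            exact key j c hjc y hyj hyc
        · intro h; exact absurd (mem_univ _) h
      have hT : T (vecT k m) = p j - p i := by rw [← hsingle, ← hd]
      rw [hT, dif_pos hmlt, dif_pos hm0]
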